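/- arXiv:1907.01398 — 2 statements merged into one kernel-verified Lean document; each statement's English description precedes it below -/
import Mathlib

section
/- Let Ψ be a root system with base Δ in a real inner product space V, and let v ∈ V satisfy (α, v) ≥ 0 for all α ∈ Δ. Set Ψ^v = {α ∈ Ψ : (α, v) = 0}. Then Ψ^v is a sub-root system of Ψ and Ψ^v ∩ Δ is a base of simple roots for Ψ^v. -/
open RealInnerProductSpace

variable {V : Type*} [NormedAddCommGroup V] [InnerProductSpace ℝ V] [FiniteDimensional ℝ V]

/-- The reflection in the hyperplane orthogonal to `α`. -/
noncomputable def sRefl (α : V) : V ≃ₗᵢ[ℝ] V := Submodule.reflection (ℝ ∙ α)ᗮ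

/-- A reduced crystallographic root system in a real inner product space. -/
structure IsRootSystem (Ψ : Set V) : Prop where
  finite : Ψ.Finite
  ne_zero : ∀ α ∈ Ψ, α ≠ 0
  neg_mem : ∀ α ∈ Ψ, -α ∈ Ψ
  reduced : ∀ α ∈ Ψ, ∀ t : ℝ, t • α ∈ Ψ → t = 1 ∨ t = -1
  refl_mem : ∀ α ∈ Ψ, ∀ β ∈ Ψ, sRefl α β ∈ Ψ
  crystallographic : ∀ α ∈ Ψ, ∀ β ∈ Ψ, ∃ n : ℤ, 2 * ⟪β, α⟫ / ⟪α, α⟫ = (n : ℝ)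

/-- `P` is a system of positive roots for `Ψ`. -/
structure IsPositiveSystem (Ψ P : Set V) : Prop where
  subset : P ⊆ Ψ
  mem_or_neg_mem : ∀ α ∈ Ψ, α ∈ P ∨ -α ∈ P
  not_neg_mem : ∀ α ∈ P, -α ∉ P
  add_mem : ∀ α ∈ P, ∀ β ∈ P, α + β ∈ Ψ → α + β ∈ P

/-- `Pi` is a sub-root system of `Ψ`: closed under negation and under addition of roots. -/
def IsSubRootSystem (Ψ Pi : Set V) : Prop :=
  Pi ⊆ Ψ ∧ (∀ α ∈ Pi, -α ∈ Pi) ∧ ∀ α ∈ Pi, ∀ β ∈ Pi, α + β ∈ Ψ → α + β ∈ Pi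

/-- `Δ` is a base (system of simple roots) of `Ψ`. -/
structure IsBase (Ψ : Set V) (Δ : Finset V) : Prop where
  subset : ↑Δ ⊆ Ψ
  indep : LinearIndependent ℝ (fun α : Δ => (α : V))
  decomp : ∀ β ∈ Ψ, ∃ c : V → ℤ, β = ∑ α ∈ Δ, (c α : ℝ) • α ∧
    ((∀ α ∈ Δ, 0 ≤ c α) ∨ (∀ α ∈ Δ, c α ≤ 0))

/-- The Weyl group of `Ψ`: the subgroup of linear isometries generated by root reflections. -/
noncomputable def weylGroup (Ψ : Set V) : Subgroup (V ≃ₗᵢ[ℝ] V) :=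
  Subgroup.closure {g | ∃ α ∈ Ψ, g = sRefl α}

/-- `w` commutes with `θ` as a map on `V`. -/
def commutesWith (θ w : V ≃ₗᵢ[ℝ] V) : Prop := ∀ x : V, θ (w x) = w (θ x)


open scoped Classical in
/-- If `(α,v) ≥ 0` for all simple roots `α`, then `Ψ^v = {α ∈ Ψ : (α,v) = 0}` is a
sub-root system of `Ψ` and `Ψ^v ∩ Δ` is a base of simple roots for `Ψ^v`. -/
theorem stmt3 (Ψ : Set V) (hΨ : IsRootSystem Ψ) (Δ : Finset V) (hΔ : IsBase Ψ Δ)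
    (v : V) (hv : ∀ α ∈ Δ, 0 ≤ ⟪α, v⟫) :
    IsSubRootSystem Ψ {α ∈ Ψ | ⟪α, v⟫ = 0} ∧
      IsBase {α ∈ Ψ | ⟪α, v⟫ = 0} (Δ.filter fun α => ⟪α, v⟫ = 0) := by
  constructor
  · refine ⟨fun α hα => hα.1, fun α hα => ⟨hΨ.neg_mem α hα.1, by
      simp [inner_neg_left, hα.2]⟩, fun α hα β hβ hsum => ⟨hsum, by
      simp [inner_add_left, hα.2, hβ.2]⟩⟩
  · constructor
    · intro α hα
      rw [Finset.coe_filter] at hα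
      exact ⟨hΔ.subset hα.1, hα.2⟩
    · have hinj : Function.Injective
          (fun x : (Δ.filter fun α => ⟪α, v⟫ = 0) => (⟨x.1, (Finset.mem_filter.1 x.2).1⟩ : Δ)) := by
        intro a b h
        exact Subtype.ext (congrArg (fun y : Δ => (y : V)) h)
      exact hΔ.indep.comp _ hinj
    · intro β hβ
      obtain ⟨c, hc, hsign⟩ := hΔ.decomp β hβ.1
      have hzero : ∀ α ∈ Δ, ¬ (⟪α, v⟫ = 0) → c α = 0 := by
        have hip : ∑ α ∈ Δ, (c α : ℝ) * ⟪α, v⟫ = 0 := by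
          have := hβ.2
          rw [hc, sum_inner] at this
          simpa [real_inner_smul_left] using this
        rcases hsign with hpos | hneg
        · have h0 : ∀ α ∈ Δ, (c α : ℝ) * ⟪α, v⟫ = 0 :=
            (Finset.sum_eq_zero_iff_of_nonneg (fun α hα =>
              mul_nonneg (by exact_mod_cast hpos α hα) (hv α hα))).1 hip
          intro α hα hne
          rcases mul_eq_zero.1 (h0 α hα) with h | h
          · exact_mod_cast h
          · exact absurd h hne
        · have h0 : ∀ α ∈ Δ, (c α : ℝ) * ⟪α, v⟫ = 0 := by
            have : ∑ α ∈ Δ, -((c α : ℝ) * ⟪α, v⟫) = 0 := by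
              rw [← neg_zero, ← hip, ← Finset.sum_neg_distrib]
            intro α hα
            have := (Finset.sum_eq_zero_iff_of_nonneg (fun α hα =>
              neg_nonneg.2 (mul_nonpos_of_nonpos_of_nonneg
                (by exact_mod_cast hneg α hα) (hv α hα)))).1 this α hα
            linarith
          intro α hα hne
          rcases mul_eq_zero.1 (h0 α hα) with h | h
          · exact_mod_cast h
          · exact absurd h hne
      refine ⟨c, ?_, ?_⟩
      · rw [hc]
        rw [Finset.sum_filter_of_ne]
        intro α hα hne
        by_contra h
        exact hne (by rw [hzero α hα h, Int.cast_zero, zero_smul])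
      · rcases hsign with hpos | hneg
        · exact Or.inl fun α hα => hpos α (Finset.mem_filter.1 hα).1
        · exact Or.inr fun α hα => hneg α (Finset.mem_filter.1 hα).1
end

section
/- Let θ be an involutive isometry of a Euclidean space preserving a root system Φ, and let W^re (resp. W^im) be the Weyl group of the subsystem of roots with θ(α) = −α (resp. θ(α) = α). Then W^re and W^im are normal subgroups of W(Φ)^θ, and every element of W^re fixes every imaginary root pointwise, while every element of W^im fixes every real root pointwise; in particular W^re and W^im commute elementwise and W^re W^im = W^re × W^im inside W(Φ)^θ. -/
open RealInnerProductSpace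

variable {V : Type*} [NormedAddCommGroup V] [InnerProductSpace ℝ V] [FiniteDimensional ℝ V]

section Aux

lemma sRefl_apply' (α v : V) : sRefl α v = v - ((2 : ℝ) * (⟪α, v⟫ / ‖α‖ ^ 2)) • α := by
  rw [sRefl, Submodule.reflection_orthogonal_apply, Submodule.reflection_singleton_apply, neg_sub]
  congr 1
  rw [two_nsmul, ← two_smul ℝ, smul_smul]
  norm_num

lemma sRefl_equiv (f : V ≃ₗᵢ[ℝ] V) (α v : V) : f (sRefl α v) = sRefl (f α) (f v) := by
  rw [sRefl_apply', sRefl_apply', map_sub, map_smul, f.inner_map_map, f.norm_map]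

lemma sRefl_neg_apply (α v : V) : sRefl (-α) v = sRefl α v := by
  simp [sRefl_apply', neg_div, mul_neg]

lemma sRefl_inv (α : V) : (sRefl α)⁻¹ = sRefl α := rfl

lemma conj_sRefl (w : V ≃ₗᵢ[ℝ] V) (α : V) : w * sRefl α * w⁻¹ = sRefl (w α) := by
  ext x
  have h := sRefl_equiv w α (w⁻¹ x)
  simp only [LinearIsometryEquiv.coe_mul, Function.comp_apply, LinearIsometryEquiv.coe_inv] at *
  rw [h, w.apply_symm_apply]

lemma sRefl_fix {α v : V} (h : ⟪α, v⟫ = 0) : sRefl α v = v := by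
  rw [sRefl_apply', h]; simp

lemma orth_re_im (θ : V ≃ₗᵢ[ℝ] V) {α β : V} (ha : θ α = -α) (hb : θ β = β) :
    ⟪α, β⟫ = 0 := by
  have h := θ.inner_map_map α β
  rw [ha, hb, inner_neg_left] at h
  linarith

/-- Weyl group elements map roots to roots. -/
lemma weyl_maps (Ψ : Set V) (hrefl : ∀ α ∈ Ψ, ∀ β ∈ Ψ, sRefl α β ∈ Ψ)
    {w : V ≃ₗᵢ[ℝ] V} (hw : w ∈ weylGroup Ψ) : ∀ β ∈ Ψ, w β ∈ Ψ := by
  have : (∀ β ∈ Ψ, w β ∈ Ψ) ∧ (∀ β ∈ Ψ, w⁻¹ β ∈ Ψ) := by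
    refine Subgroup.closure_induction (fun g hg => ?_) (by simp) ?_ ?_ hw
    · obtain ⟨α, hα, rfl⟩ := hg
      exact ⟨fun β hβ => hrefl α hα β hβ, fun β hβ => by rw [sRefl_inv]; exact hrefl α hα β hβ⟩
    · rintro x y _ _ ⟨hx1, hx2⟩ ⟨hy1, hy2⟩
      constructor
      · intro β hβ
        have : (x * y) β = x (y β) := rfl
        rw [this]; exact hx1 _ (hy1 β hβ)
      · intro β hβ
        have : (x * y)⁻¹ β = y⁻¹ (x⁻¹ β) := by rw [mul_inv_rev]; rfl
        rw [this]; exact hy2 _ (hx2 β hβ)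
    · rintro x _ ⟨hx1, hx2⟩
      exact ⟨hx2, by simpa using hx1⟩
  exact this.1

lemma weyl_commutes (θ : V ≃ₗᵢ[ℝ] V) (Ψ : Set V) (hΨ : ∀ α ∈ Ψ, θ α = α ∨ θ α = -α)
    {u : V ≃ₗᵢ[ℝ] V} (hu : u ∈ weylGroup Ψ) : commutesWith θ u := by
  refine Subgroup.closure_induction (fun g hg => ?_) (fun x => rfl) ?_ ?_ hu
  · obtain ⟨α, hα, rfl⟩ := hg
    intro x
    rw [sRefl_equiv θ α x]
    rcases hΨ α hα with h | h
    · rw [h]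
    · rw [h, sRefl_neg_apply]
  · intro x y _ _ hx hy v
    have h1 : (x * y) v = x (y v) := rfl
    have h2 : (x * y) (θ v) = x (y (θ v)) := rfl
    rw [h1, h2, hx, hy]
  · intro x _ hx v
    have h := hx (x⁻¹ v)
    simp only [LinearIsometryEquiv.coe_inv] at *
    rw [x.apply_symm_apply] at h
    exact x.injective (by rw [x.apply_symm_apply, h])

/-- If every generator root is orthogonal to `β`, then the Weyl group fixes `β`. -/
lemma weyl_fix (Ψ : Set V) {β : V} (horth : ∀ α ∈ Ψ, ⟪α, β⟫ = 0)
    {u : V ≃ₗᵢ[ℝ] V} (hu : u ∈ weylGroup Ψ) : u β = β := by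
  refine Subgroup.closure_induction (fun g hg => ?_) rfl ?_ ?_ hu
  · obtain ⟨α, hα, rfl⟩ := hg
    exact sRefl_fix (horth α hα)
  · intro x y _ _ hx hy
    have : (x * y) β = x (y β) := rfl
    rw [this, hy, hx]
  · intro x _ hx
    conv_lhs => rw [← hx]
    exact x.symm_apply_apply β

lemma weyl_conj (Ψ : Set V) (w : V ≃ₗᵢ[ℝ] V) (hmaps : ∀ α ∈ Ψ, w α ∈ Ψ)
    {u : V ≃ₗᵢ[ℝ] V} (hu : u ∈ weylGroup Ψ) : w * u * w⁻¹ ∈ weylGroup Ψ := by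
  refine Subgroup.closure_induction (fun g hg => ?_) ?_ ?_ ?_ hu
  · obtain ⟨α, hα, rfl⟩ := hg
    rw [conj_sRefl]
    exact Subgroup.subset_closure ⟨w α, hmaps α hα, rfl⟩
  · have : w * 1 * w⁻¹ = 1 := by group
    rw [this]; exact one_mem _
  · intro x y _ _ hx hy
    have : w * (x * y) * w⁻¹ = (w * x * w⁻¹) * (w * y * w⁻¹) := by group
    rw [this]; exact mul_mem hx hy
  · intro x _ hx
    have : w * x⁻¹ * w⁻¹ = (w * x * w⁻¹)⁻¹ := by group
    rw [this]; exact inv_mem hx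

lemma weyl_commute_of_fix (Ψ : Set V) {v : V ≃ₗᵢ[ℝ] V} (hfix : ∀ α ∈ Ψ, v α = α)
    {u : V ≃ₗᵢ[ℝ] V} (hu : u ∈ weylGroup Ψ) : u * v = v * u := by
  refine Subgroup.closure_induction (fun g hg => ?_) (by group) ?_ ?_ hu
  · obtain ⟨α, hα, rfl⟩ := hg
    have h : v * sRefl α * v⁻¹ = sRefl α := by rw [conj_sRefl, hfix α hα]
    calc sRefl α * v = (v * sRefl α * v⁻¹) * v := by rw [h]
      _ = v * sRefl α := by group
  · intro x y _ _ hx hy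
    rw [mul_assoc, hy, ← mul_assoc, hx, mul_assoc]
  · intro x _ hx
    exact Commute.inv_left hx

end Aux

/-- `W^re` and `W^im` are normal subgroups of `W(Φ)^θ`; `W^re` fixes all imaginary roots
and `W^im` fixes all real roots; hence they commute elementwise and intersect trivially. -/
theorem stmt9 (Φ : Set V) (hΦ : IsRootSystem Φ) (θ : V ≃ₗᵢ[ℝ] V)
    (hinv : ∀ x, θ (θ x) = x) (hΦθ : ⇑θ '' Φ = Φ) :
    (∀ u ∈ weylGroup {α ∈ Φ | θ α = -α}, u ∈ weylGroup Φ ∧ commutesWith θ u) ∧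
    (∀ u ∈ weylGroup {α ∈ Φ | θ α = α}, u ∈ weylGroup Φ ∧ commutesWith θ u) ∧
    (∀ w ∈ weylGroup Φ, commutesWith θ w →
      ∀ u ∈ weylGroup {α ∈ Φ | θ α = -α}, w * u * w⁻¹ ∈ weylGroup {α ∈ Φ | θ α = -α}) ∧
    (∀ w ∈ weylGroup Φ, commutesWith θ w →
      ∀ u ∈ weylGroup {α ∈ Φ | θ α = α}, w * u * w⁻¹ ∈ weylGroup {α ∈ Φ | θ α = α}) ∧
    (∀ u ∈ weylGroup {α ∈ Φ | θ α = -α}, ∀ β ∈ Φ, θ β = β → u β = β) ∧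
    (∀ u ∈ weylGroup {α ∈ Φ | θ α = α}, ∀ β ∈ Φ, θ β = -β → u β = β) ∧
    (∀ u ∈ weylGroup {α ∈ Φ | θ α = -α}, ∀ v ∈ weylGroup {α ∈ Φ | θ α = α},
      u * v = v * u) ∧
    weylGroup {α ∈ Φ | θ α = -α} ⊓ weylGroup {α ∈ Φ | θ α = α} = ⊥ := by
  have hle_re : weylGroup {α ∈ Φ | θ α = -α} ≤ weylGroup Φ :=
    Subgroup.closure_mono (fun g => by rintro ⟨α, hα, rfl⟩; exact ⟨α, hα.1, rfl⟩)
  have hle_im : weylGroup {α ∈ Φ | θ α = α} ≤ weylGroup Φ :=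
    Subgroup.closure_mono (fun g => by rintro ⟨α, hα, rfl⟩; exact ⟨α, hα.1, rfl⟩)
  have hcomm_re : ∀ u ∈ weylGroup {α ∈ Φ | θ α = -α}, commutesWith θ u :=
    fun u hu => weyl_commutes θ _ (fun α hα => Or.inr hα.2) hu
  have hcomm_im : ∀ u ∈ weylGroup {α ∈ Φ | θ α = α}, commutesWith θ u :=
    fun u hu => weyl_commutes θ _ (fun α hα => Or.inl hα.2) hu
  -- pointwise fixing
  have hfix_re : ∀ u ∈ weylGroup {α ∈ Φ | θ α = -α}, ∀ β ∈ Φ, θ β = β → u β = β := by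
    intro u hu β _ hβ
    exact weyl_fix _ (fun α hα => orth_re_im θ hα.2 hβ) hu
  have hfix_im : ∀ u ∈ weylGroup {α ∈ Φ | θ α = α}, ∀ β ∈ Φ, θ β = -β → u β = β := by
    intro u hu β _ hβ
    refine weyl_fix _ (fun α hα => ?_) hu
    rw [real_inner_comm]
    exact orth_re_im θ hβ hα.2
  -- normality
  have hnorm_re : ∀ w ∈ weylGroup Φ, commutesWith θ w →
      ∀ u ∈ weylGroup {α ∈ Φ | θ α = -α}, w * u * w⁻¹ ∈ weylGroup {α ∈ Φ | θ α = -α} := by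
    intro w hw hcw u hu
    refine weyl_conj _ w (fun α hα => ?_) hu
    refine ⟨weyl_maps Φ hΦ.refl_mem hw α hα.1, ?_⟩
    rw [hcw α, hα.2, map_neg]
  have hnorm_im : ∀ w ∈ weylGroup Φ, commutesWith θ w →
      ∀ u ∈ weylGroup {α ∈ Φ | θ α = α}, w * u * w⁻¹ ∈ weylGroup {α ∈ Φ | θ α = α} := by
    intro w hw hcw u hu
    refine weyl_conj _ w (fun α hα => ?_) hu
    refine ⟨weyl_maps Φ hΦ.refl_mem hw α hα.1, ?_⟩
    rw [hcw α, hα.2]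
  -- commuting
  have hcommute : ∀ u ∈ weylGroup {α ∈ Φ | θ α = -α}, ∀ v ∈ weylGroup {α ∈ Φ | θ α = α},
      u * v = v * u := by
    intro u hu v hv
    exact weyl_commute_of_fix _ (fun α hα => hfix_im v hv α hα.1 hα.2) hu
  refine ⟨fun u hu => ⟨hle_re hu, hcomm_re u hu⟩, fun u hu => ⟨hle_im hu, hcomm_im u hu⟩,
    hnorm_re, hnorm_im, hfix_re, hfix_im, hcommute, ?_⟩
  -- trivial intersection
  rw [eq_bot_iff]
  intro u hu
  obtain ⟨hure, huim⟩ := hu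
  set K : Submodule ℝ V := Submodule.span ℝ {α ∈ Φ | θ α = -α} with hK
  have hA : ∀ x ∈ Kᗮ, u x = x := by
    intro x hx
    exact weyl_fix _ (fun α hα => (K.mem_orthogonal x).mp hx α (Submodule.subset_span hα)) hure
  have hB : ∀ x ∈ K, u x = x := by
    intro x hx
    refine Submodule.span_induction (fun α hα => hfix_im u huim α hα.1 hα.2) (map_zero u) ?_ ?_ hx
    · intro a b _ _ ha hb
      rw [map_add, ha, hb]
    · intro c a _ ha
      rw [map_smul, ha]
  rw [Subgroup.mem_bot]
  ext x
  obtain ⟨y, hy, z, hz, rfl⟩ := K.exists_add_mem_mem_orthogonal x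
  simp [map_add, hA z hz, hB y hy]
end
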